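/- There do not exist three pairwise disjoint line spreads S1, S2, S3 of V(4,2) together with an assignment that to each nonzero point Q of V(4,2) associates a 3-dimensional subspace-intersection condition as follows: for each point Q, letting L_{Q,i} be the line of Si through Q, the line L_{Q,3} is contained in the span of L_{Q,1} and L_{Q,2}. -/

import Mathlib

abbrev V42 := Fin 4 → ZMod 2

/-- A line spread of `V(4,2)`: a set of 2-dimensional subspaces such that every
nonzero vector lies in exactly one of them. -/
def IsLineSpread (S : Set (Submodule (ZMod 2) V42)) : Prop :=
  (∀ L ∈ S, Module.finrank (ZMod 2) L = 2) ∧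
  ∀ v : V42, v ≠ 0 → ∃! L, L ∈ S ∧ v ∈ L

private lemma zadd_self (v : V42) : v + v = 0 := by
  funext i
  have h : ∀ a : ZMod 2, a + a = 0 := by decide
  exact h (v i)

private lemma eq_of_add_eq_zero {a b : V42} (h : a + b = 0) : a = b := by
  calc a = a + (b + b) := by rw [zadd_self, add_zero]
  _ = (a + b) + b := by rw [add_assoc]
  _ = b := by rw [h, zero_add]

private lemma line_char {L : Submodule (ZMod 2) V42} (h2 : Module.finrank (ZMod 2) L = 2)
    {q : V42} (hq : q ∈ L) (hq0 : q ≠ 0) :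
    ∃ y : V42, y ≠ 0 ∧ y ≠ q ∧ ∀ v, v ∈ L ↔ (v = 0 ∨ v = q ∨ v = y ∨ v = q + y) := by
  classical
  have key : ∃ x y : V42, x ≠ 0 ∧ y ≠ 0 ∧ x + y ≠ 0 ∧
      ∀ v, v ∈ L ↔ (v = 0 ∨ v = x ∨ v = y ∨ v = x + y) := by
    let b := Module.finBasisOfFinrankEq (ZMod 2) L h2
    have hli : LinearIndependent (ZMod 2) (fun i => ((b i : L) : V42)) :=
      b.linearIndependent.map' L.subtype (Submodule.ker_subtype L)
    have hli' := Fintype.linearIndependent_iff.mp hli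
    have hzc : ∀ c : ZMod 2, c = 0 ∨ c = 1 := by decide
    refine ⟨(b 0 : V42), (b 1 : V42), ?_, ?_, ?_, ?_⟩
    · intro h
      have := hli' ![1, 0] (by rw [Fin.sum_univ_two]; simp [h]) 0
      revert this; decide
    · intro h
      have := hli' ![0, 1] (by rw [Fin.sum_univ_two]; simp [h]) 1
      revert this; decide
    · intro h
      have := hli' ![1, 1] (by rw [Fin.sum_univ_two]; simpa using h) 0
      revert this; decide
    · intro v
      constructor
      · intro hv
        have hrep := b.sum_repr ⟨v, hv⟩
        rw [Fin.sum_univ_two] at hrep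
        have hcoe := congrArg (Subtype.val) hrep
        push_cast at hcoe
        rcases hzc (b.repr ⟨v, hv⟩ 0) with h0 | h0 <;> rcases hzc (b.repr ⟨v, hv⟩ 1) with h1 | h1 <;>
          rw [h0, h1] at hcoe <;> simp only [zero_smul, one_smul, zero_add, add_zero] at hcoe
        · left; exact hcoe.symm
        · right; right; left; exact hcoe.symm
        · right; left; exact hcoe.symm
        · right; right; right; exact hcoe.symm
      · rintro (rfl | rfl | rfl | rfl)
        · exact L.zero_mem
        · exact (b 0).2
        · exact (b 1).2
        · exact L.add_mem (b 0).2 (b 1).2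
  obtain ⟨x, y, hxn, hyn, hxyn, hmem⟩ := key
  have hxyne : x ≠ y := fun h => hxyn (by rw [h, zadd_self])
  rcases (hmem q).mp hq with h | h | h | h
  · exact absurd h hq0
  · -- q = x
    subst h
    exact ⟨y, hyn, fun h => hxyne h.symm, hmem⟩
  · -- q = y
    subst h
    refine ⟨x, hxn, hxyne, fun v => ?_⟩
    rw [hmem v, add_comm q x]
    tauto
  · -- q = x + y
    subst h
    have hqx : (x + y) + x = y := by
      rw [add_comm x y, add_assoc, zadd_self, add_zero]
    refine ⟨x, hxn, fun h => hyn (by rw [← h] at hqx; rw [← hqx, h, zadd_self]), fun v => ?_⟩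
    rw [hmem v, hqx]
    tauto

private lemma move_add {a b c : V42} (h : a + b = c) : a = c + b := by
  rw [← h, add_assoc, zadd_self, add_zero]

private lemma move_add' {a b c : V42} (h : a + b = c) : b = a + c := by
  rw [← h, ← add_assoc, zadd_self, zero_add]

section helpers
variable {S S' : Set (Submodule (ZMod 2) V42)}

private lemma spread_unique (hS : IsLineSpread S) {L L' : Submodule (ZMod 2) V42}
    (hL : L ∈ S) (hL' : L' ∈ S) {v : V42} (hv : v ≠ 0) (h1 : v ∈ L) (h2 : v ∈ L') : L = L' := by
  obtain ⟨W, _, hW⟩ := hS.2 v hv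
  rw [hW L ⟨hL, h1⟩, hW L' ⟨hL', h2⟩]

-- two lines in the same spread sharing a nonzero point v are equal; so if w is in one but not
-- the other we get False
private lemma same_line_kill (hS : IsLineSpread S) {L L' : Submodule (ZMod 2) V42}
    (hL : L ∈ S) (hL' : L' ∈ S) (v w : V42) (hv : v ≠ 0) (h1 : v ∈ L) (h2 : v ∈ L')
    (hw : w ∈ L) (hw' : w ∉ L') : False :=
  hw' ((spread_unique hS hL hL' hv h1 h2) ▸ hw)

-- a line of S equal (same 4 points) to a line of S', with S ∩ S' = ∅
private lemma cross_kill {L L' : Submodule (ZMod 2) V42} {a b c a' b' c' : V42}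
    (hL : L ∈ S) (hL' : L' ∈ S') (hd : S ∩ S' = ∅)
    (hch : ∀ v, v ∈ L ↔ (v = 0 ∨ v = a ∨ v = b ∨ v = c))
    (hch' : ∀ v, v ∈ L' ↔ (v = 0 ∨ v = a' ∨ v = b' ∨ v = c'))
    (hiff : ∀ v : V42, (v = 0 ∨ v = a ∨ v = b ∨ v = c) ↔ (v = 0 ∨ v = a' ∨ v = b' ∨ v = c')) :
    False := by
  have hLL : L = L' := Submodule.ext fun v => by rw [hch v, hch' v, hiff v]
  have : L ∈ S ∩ S' := ⟨hL, hLL ▸ hL'⟩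
  rw [hd] at this
  exact this

private lemma line_through (hS : IsLineSpread S) {q : V42} (hq : q ≠ 0) :
    ∃ L ∈ S, ∃ y : V42, y ≠ 0 ∧ y ≠ q ∧
      ∀ v, v ∈ L ↔ (v = 0 ∨ v = q ∨ v = y ∨ v = q + y) := by
  obtain ⟨L, ⟨hLS, hqL⟩, -⟩ := hS.2 q hq
  obtain ⟨y, h1, h2, h3⟩ := line_char (hS.1 L hLS) hqL hq
  exact ⟨L, hLS, y, h1, h2, h3⟩

end helpers

private def E0 : V42 := ![1,0,0,0]
private def E1 : V42 := ![0,1,0,0]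
private def E2 : V42 := ![0,0,1,0]
private def E3 : V42 := ![0,0,0,1]

private lemma v42_cases (w : V42) :
    w = 0 ∨ w = E0 ∨ w = E1 ∨ w = E0+E1 ∨ w = E2 ∨ w = E0+E2 ∨ w = E1+E2 ∨ w = E0+E1+E2 ∨
    w = E3 ∨ w = E0+E3 ∨ w = E1+E3 ∨ w = E0+E1+E3 ∨ w = E2+E3 ∨ w = E0+E2+E3 ∨
    w = E1+E2+E3 ∨ w = E0+E1+E2+E3 := by
  revert w; decide

section transport
variable (f : V42 ≃ₗ[ZMod 2] V42)

private def mapS (S : Set (Submodule (ZMod 2) V42)) : Set (Submodule (ZMod 2) V42) :=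
  (Submodule.map (f : V42 →ₗ[ZMod 2] V42)) '' S

private lemma mapS_spread {S : Set (Submodule (ZMod 2) V42)} (hS : IsLineSpread S) :
    IsLineSpread (mapS f S) := by
  constructor
  · rintro L ⟨L0, hL0, rfl⟩
    rw [LinearEquiv.finrank_map_eq f L0]
    exact hS.1 L0 hL0
  · intro v hv
    have hv' : f.symm v ≠ 0 := fun h => hv (by
      have := congrArg f h
      simpa using this)
    obtain ⟨L0, ⟨hL0S, hL0v⟩, huniq⟩ := hS.2 (f.symm v) hv'
    refine ⟨Submodule.map (f : V42 →ₗ[ZMod 2] V42) L0, ⟨⟨L0, hL0S, rfl⟩, ?_⟩, ?_⟩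
    · rw [Submodule.mem_map_equiv]; exact hL0v
    · rintro L' ⟨⟨L1, hL1S, rfl⟩, hvL'⟩
      rw [Submodule.mem_map_equiv] at hvL'
      rw [huniq L1 ⟨hL1S, hvL'⟩]

private lemma mapS_disjoint {A B : Set (Submodule (ZMod 2) V42)} (h : A ∩ B = ∅) :
    mapS f A ∩ mapS f B = ∅ := by
  rw [Set.eq_empty_iff_forall_notMem]
  rintro L ⟨⟨L1, hL1, rfl⟩, ⟨L2, hL2, hL2e⟩⟩
  have : L2 = L1 := Submodule.map_injective_of_injective f.injective hL2e
  subst this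
  have : L2 ∈ A ∩ B := ⟨hL1, hL2⟩
  rw [h] at this
  exact this

private lemma mapS_cond {S1 S2 S3 : Set (Submodule (ZMod 2) V42)}
    (hc : ∀ Q : V42, Q ≠ 0 →
        ∀ L1 L2 L3 : Submodule (ZMod 2) V42,
          L1 ∈ S1 → Q ∈ L1 → L2 ∈ S2 → Q ∈ L2 → L3 ∈ S3 → Q ∈ L3 → L3 ≤ L1 ⊔ L2) :
    ∀ Q : V42, Q ≠ 0 →
        ∀ L1 L2 L3 : Submodule (ZMod 2) V42,
          L1 ∈ mapS f S1 → Q ∈ L1 → L2 ∈ mapS f S2 → Q ∈ L2 → L3 ∈ mapS f S3 → Q ∈ L3 →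
          L3 ≤ L1 ⊔ L2 := by
  rintro Q hQ L1 L2 L3 ⟨M1, hM1, rfl⟩ hQ1 ⟨M2, hM2, rfl⟩ hQ2 ⟨M3, hM3, rfl⟩ hQ3
  rw [Submodule.mem_map_equiv] at hQ1 hQ2 hQ3
  have hQ' : f.symm Q ≠ 0 := fun h => hQ (by simpa using congrArg f h)
  have hle := hc (f.symm Q) hQ' M1 M2 M3 hM1 hQ1 hM2 hQ2 hM3 hQ3
  rw [← Submodule.map_sup]
  exact Submodule.map_mono hle

end transport

set_option maxHeartbeats 4000000 in
private lemma core
    (T1 T2 T3 : Set (Submodule (ZMod 2) V42))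
    (hT1 : IsLineSpread T1) (hT2 : IsLineSpread T2) (hT3 : IsLineSpread T3)
    (d12 : T1 ∩ T2 = ∅) (d13 : T1 ∩ T3 = ∅) (d23 : T2 ∩ T3 = ∅)
    (hc : ∀ Q : V42, Q ≠ 0 → ∀ L1 L2 L3 : Submodule (ZMod 2) V42,
      L1 ∈ T1 → Q ∈ L1 → L2 ∈ T2 → Q ∈ L2 → L3 ∈ T3 → Q ∈ L3 → L3 ≤ L1 ⊔ L2)
    (P1 P2 P3 : Submodule (ZMod 2) V42)
    (hP1T : P1 ∈ T1) (hP1a : E0 ∈ P1) (hP1b : E1 ∈ P1)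
    (hP2T : P2 ∈ T2) (hP2a : E0 ∈ P2) (hP2b : E2 ∈ P2)
    (hP3T : P3 ∈ T2) (hP3a : E1 ∈ P3) (hP3b : E3 ∈ P3) : False := by
  classical
  -- Step 0: normalize the three given lines
  have cP1 : ∀ v, v ∈ P1 ↔ (v = 0 ∨ v = E0 ∨ v = E1 ∨ v = E0 + E1) := by
    obtain ⟨y, hy0, hyq, hch⟩ := line_char (hT1.1 P1 hP1T) hP1a (by decide)
    rcases (hch E1).mp hP1b with h | h | h | h
    · exact absurd h (by decide)
    · exact absurd h (by decide)
    · subst h; exact hch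
    · have hy : y = E0 + E1 := by
        rw [h, ← add_assoc, show E0 + E0 = (0:V42) from by decide, zero_add]
      subst hy
      intro v; rw [hch v]; revert v; decide
  have cP2 : ∀ v, v ∈ P2 ↔ (v = 0 ∨ v = E0 ∨ v = E2 ∨ v = E0 + E2) := by
    obtain ⟨y, hy0, hyq, hch⟩ := line_char (hT2.1 P2 hP2T) hP2a (by decide)
    rcases (hch E2).mp hP2b with h | h | h | h
    · exact absurd h (by decide)
    · exact absurd h (by decide)
    · subst h; exact hch
    · have hy : y = E0 + E2 := by
        rw [h, ← add_assoc, show E0 + E0 = (0:V42) from by decide, zero_add]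
      subst hy
      intro v; rw [hch v]; revert v; decide
  have cP3 : ∀ v, v ∈ P3 ↔ (v = 0 ∨ v = E1 ∨ v = E3 ∨ v = E1 + E3) := by
    obtain ⟨y, hy0, hyq, hch⟩ := line_char (hT2.1 P3 hP3T) hP3a (by decide)
    rcases (hch E3).mp hP3b with h | h | h | h
    · exact absurd h (by decide)
    · exact absurd h (by decide)
    · subst h; exact hch
    · have hy : y = E1 + E3 := by
        rw [h, ← add_assoc, show E1 + E1 = (0:V42) from by decide, zero_add]
      subst hy
      intro v; rw [hch v]; revert v; decide
  -- N1 : the T3-line through E0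
  obtain ⟨N1, hN1T, w1, hw10, hw1q, cN1'⟩ := line_through hT3 (show (E0:V42) ≠ 0 from by decide)
  have hN1le := hc E0 (by decide) P1 P2 N1 hP1T hP1a hP2T hP2a hN1T ((cN1' E0).mpr (by tauto))
  have cN1 : ∀ t, t ∈ N1 ↔ (t = 0 ∨ t = E0 ∨ t = E1+E2 ∨ t = E0+E1+E2) := by
    obtain ⟨u, hu, v, hv, huv⟩ := Submodule.mem_sup.mp (hN1le ((cN1' w1).mpr (by tauto)))
    rw [cP1] at hu
    rw [cP2] at hv
    have hcases : w1 = 0 ∨ w1 = E0 ∨ w1 = E1 ∨ w1 = E0+E1 ∨ w1 = E2 ∨ w1 = E0+E2 ∨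
        w1 = E1+E2 ∨ w1 = E0+E1+E2 := by
      rcases hu with rfl | rfl | rfl | rfl <;> rcases hv with rfl | rfl | rfl | rfl <;>
        subst huv <;> decide
    rcases hcases with rfl | rfl | rfl | rfl | rfl | rfl | rfl | rfl
    · exact absurd rfl hw10
    · exact absurd rfl hw1q
    · exact (cross_kill hP1T hN1T d13 cP1 cN1' (by decide)).elim
    · exact (cross_kill hP1T hN1T d13 cP1 cN1' (by decide)).elim
    · exact (cross_kill hP2T hN1T d23 cP2 cN1' (by decide)).elim
    · exact (cross_kill hP2T hN1T d23 cP2 cN1' (by decide)).elim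
    · first
        | exact cN1'
        | (intro t; rw [cN1' t]; revert t; decide)
    · first
        | exact cN1'
        | (intro t; rw [cN1' t]; revert t; decide)
  clear cN1' hN1le hw10 hw1q
  -- N2 : the T3-line through E1
  obtain ⟨N2, hN2T, w2, hw20, hw2q, cN2'⟩ := line_through hT3 (show (E1:V42) ≠ 0 from by decide)
  have hN2le := hc E1 (by decide) P1 P3 N2 hP1T hP1b hP3T hP3a hN2T ((cN2' E1).mpr (by tauto))
  have cN2 : ∀ t, t ∈ N2 ↔ (t = 0 ∨ t = E1 ∨ t = E0+E3 ∨ t = E0+E1+E3) := by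
    obtain ⟨u, hu, v, hv, huv⟩ := Submodule.mem_sup.mp (hN2le ((cN2' w2).mpr (by tauto)))
    rw [cP1] at hu
    rw [cP3] at hv
    have hcases : w2 = 0 ∨ w2 = E1 ∨ w2 = E0 ∨ w2 = E0+E1 ∨ w2 = E3 ∨ w2 = E1+E3 ∨
        w2 = E0+E3 ∨ w2 = E0+E1+E3 := by
      rcases hu with rfl | rfl | rfl | rfl <;> rcases hv with rfl | rfl | rfl | rfl <;>
        subst huv <;> decide
    rcases hcases with rfl | rfl | rfl | rfl | rfl | rfl | rfl | rfl
    · exact absurd rfl hw20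
    · exact absurd rfl hw2q
    · exact (cross_kill hP1T hN2T d13 cP1 cN2' (by decide)).elim
    · exact (cross_kill hP1T hN2T d13 cP1 cN2' (by decide)).elim
    · exact (cross_kill hP3T hN2T d23 cP3 cN2' (by decide)).elim
    · exact (cross_kill hP3T hN2T d23 cP3 cN2' (by decide)).elim
    · first
        | exact cN2'
        | (intro t; rw [cN2' t]; revert t; decide)
    · first
        | exact cN2'
        | (intro t; rw [cN2' t]; revert t; decide)
  clear cN2' hN2le hw20 hw2q
  -- L23 : the T2-line through E0+E1, two possibilities
  obtain ⟨L23, hL23T, y, hy0, hyq, cL'⟩ := line_through hT2 (show E0+E1 ≠ (0:V42) from by decide)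
  have hsplit : (∀ t, t ∈ L23 ↔ (t = 0 ∨ t = E0+E1 ∨ t = E2+E3 ∨ t = E0+E1+E2+E3)) ∨
      (∀ t, t ∈ L23 ↔ (t = 0 ∨ t = E0+E1 ∨ t = E0+E2+E3 ∨ t = E1+E2+E3)) := by
    rcases v42_cases y with rfl|rfl|rfl|rfl|rfl|rfl|rfl|rfl|rfl|rfl|rfl|rfl|rfl|rfl|rfl|rfl
    · exact absurd rfl hy0
    · exact (same_line_kill hT2 hL23T hP2T E0 (E0+E1) (by decide) ((cL' _).mpr (by decide))
        ((cP2 _).mpr (by decide)) ((cL' _).mpr (by decide)) (by rw [cP2]; decide)).elim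
    · exact (same_line_kill hT2 hL23T hP3T E1 (E0+E1) (by decide) ((cL' _).mpr (by decide))
        ((cP3 _).mpr (by decide)) ((cL' _).mpr (by decide)) (by rw [cP3]; decide)).elim
    · exact absurd rfl hyq
    · exact (same_line_kill hT2 hL23T hP2T E2 (E0+E1) (by decide) ((cL' _).mpr (by decide))
        ((cP2 _).mpr (by decide)) ((cL' _).mpr (by decide)) (by rw [cP2]; decide)).elim
    · exact (same_line_kill hT2 hL23T hP2T (E0+E2) (E0+E1) (by decide) ((cL' _).mpr (by decide))
        ((cP2 _).mpr (by decide)) ((cL' _).mpr (by decide)) (by rw [cP2]; decide)).elim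
    · exact (same_line_kill hT2 hL23T hP2T (E0+E2) (E0+E1) (by decide) ((cL' _).mpr (by decide))
        ((cP2 _).mpr (by decide)) ((cL' _).mpr (by decide)) (by rw [cP2]; decide)).elim
    · exact (same_line_kill hT2 hL23T hP2T E2 (E0+E1) (by decide) ((cL' _).mpr (by decide))
        ((cP2 _).mpr (by decide)) ((cL' _).mpr (by decide)) (by rw [cP2]; decide)).elim
    · exact (same_line_kill hT2 hL23T hP3T E3 (E0+E1) (by decide) ((cL' _).mpr (by decide))
        ((cP3 _).mpr (by decide)) ((cL' _).mpr (by decide)) (by rw [cP3]; decide)).elim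
    · exact (same_line_kill hT2 hL23T hP3T (E1+E3) (E0+E1) (by decide) ((cL' _).mpr (by decide))
        ((cP3 _).mpr (by decide)) ((cL' _).mpr (by decide)) (by rw [cP3]; decide)).elim
    · exact (same_line_kill hT2 hL23T hP3T (E1+E3) (E0+E1) (by decide) ((cL' _).mpr (by decide))
        ((cP3 _).mpr (by decide)) ((cL' _).mpr (by decide)) (by rw [cP3]; decide)).elim
    · exact (same_line_kill hT2 hL23T hP3T E3 (E0+E1) (by decide) ((cL' _).mpr (by decide))
        ((cP3 _).mpr (by decide)) ((cL' _).mpr (by decide)) (by rw [cP3]; decide)).elim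
    · left; first
        | exact cL'
        | (intro t; rw [cL' t]; revert t; decide)
    · right; first
        | exact cL'
        | (intro t; rw [cL' t]; revert t; decide)
    · right; first
        | exact cL'
        | (intro t; rw [cL' t]; revert t; decide)
    · left; first
        | exact cL'
        | (intro t; rw [cL' t]; revert t; decide)
  clear cL' hy0 hyq
  rcases hsplit with cL23 | cL23
  · -- CASE A : L23 = {0, E01, E23, E0123}
    -- N3 : the T3-line through E0+E1
    obtain ⟨N3, hN3T, w3, hw30, hw3q, cN3'⟩ := line_through hT3 (show E0+E1 ≠ (0:V42) from by decide)
    have hN3le := hc (E0+E1) (by decide) P1 L23 N3 hP1T ((cP1 _).mpr (by decide)) hL23T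
      ((cL23 _).mpr (by decide)) hN3T ((cN3' _).mpr (by tauto))
    have cN3 : ∀ t, t ∈ N3 ↔ (t = 0 ∨ t = E0+E1 ∨ t = E0+E2+E3 ∨ t = E1+E2+E3) := by
      obtain ⟨u, hu, v, hv, huv⟩ := Submodule.mem_sup.mp (hN3le ((cN3' w3).mpr (by tauto)))
      rw [cP1] at hu
      rw [cL23] at hv
      have hcases : w3 = 0 ∨ w3 = E0+E1 ∨ w3 = E0 ∨ w3 = E1 ∨ w3 = E2+E3 ∨ w3 = E0+E1+E2+E3 ∨
          w3 = E0+E2+E3 ∨ w3 = E1+E2+E3 := by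
        rcases hu with rfl | rfl | rfl | rfl <;> rcases hv with rfl | rfl | rfl | rfl <;>
          subst huv <;> decide
      rcases hcases with rfl | rfl | rfl | rfl | rfl | rfl | rfl | rfl
      · exact absurd rfl hw30
      · exact absurd rfl hw3q
      · exact (same_line_kill hT3 hN3T hN1T E0 (E0+E1) (by decide) ((cN3' _).mpr (by decide))
          ((cN1 _).mpr (by decide)) ((cN3' _).mpr (by decide)) (by rw [cN1]; decide)).elim
      · exact (same_line_kill hT3 hN3T hN2T E1 (E0+E1) (by decide) ((cN3' _).mpr (by decide))
          ((cN2 _).mpr (by decide)) ((cN3' _).mpr (by decide)) (by rw [cN2]; decide)).elim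
      · exact (cross_kill hL23T hN3T d23 cL23 cN3' (by decide)).elim
      · exact (cross_kill hL23T hN3T d23 cL23 cN3' (by decide)).elim
      · first
        | exact cN3'
        | (intro t; rw [cN3' t]; revert t; decide)
      · first
        | exact cN3'
        | (intro t; rw [cN3' t]; revert t; decide)
    clear cN3' hN3le hw30 hw3q
    -- M : the T3-line through E2
    obtain ⟨M, hMT, y2, hy20, hy2q, cM'⟩ := line_through hT3 (show (E2:V42) ≠ 0 from by decide)
    have cM : ∀ t, t ∈ M ↔ (t = 0 ∨ t = E2 ∨ t = E3 ∨ t = E2+E3) := by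
      rcases v42_cases y2 with rfl|rfl|rfl|rfl|rfl|rfl|rfl|rfl|rfl|rfl|rfl|rfl|rfl|rfl|rfl|rfl
      · exact absurd rfl hy20
      · exact (same_line_kill hT3 hMT hN1T E0 E2 (by decide) ((cM' _).mpr (by decide))
          ((cN1 _).mpr (by decide)) ((cM' _).mpr (by decide)) (by rw [cN1]; decide)).elim
      · exact (same_line_kill hT3 hMT hN2T E1 E2 (by decide) ((cM' _).mpr (by decide))
          ((cN2 _).mpr (by decide)) ((cM' _).mpr (by decide)) (by rw [cN2]; decide)).elim
      · exact (same_line_kill hT3 hMT hN3T (E0+E1) E2 (by decide) ((cM' _).mpr (by decide))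
          ((cN3 _).mpr (by decide)) ((cM' _).mpr (by decide)) (by rw [cN3]; decide)).elim
      · exact absurd rfl hy2q
      · exact (same_line_kill hT3 hMT hN1T E0 E2 (by decide) ((cM' _).mpr (by decide))
          ((cN1 _).mpr (by decide)) ((cM' _).mpr (by decide)) (by rw [cN1]; decide)).elim
      · exact (same_line_kill hT3 hMT hN1T (E1+E2) E2 (by decide) ((cM' _).mpr (by decide))
          ((cN1 _).mpr (by decide)) ((cM' _).mpr (by decide)) (by rw [cN1]; decide)).elim
      · exact (same_line_kill hT3 hMT hN1T (E0+E1+E2) E2 (by decide) ((cM' _).mpr (by decide))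
          ((cN1 _).mpr (by decide)) ((cM' _).mpr (by decide)) (by rw [cN1]; decide)).elim
      · first
        | exact cM'
        | (intro t; rw [cM' t]; revert t; decide)
      · exact (same_line_kill hT3 hMT hN2T (E0+E3) E2 (by decide) ((cM' _).mpr (by decide))
          ((cN2 _).mpr (by decide)) ((cM' _).mpr (by decide)) (by rw [cN2]; decide)).elim
      · exact (same_line_kill hT3 hMT hN3T (E1+E2+E3) E2 (by decide) ((cM' _).mpr (by decide))
          ((cN3 _).mpr (by decide)) ((cM' _).mpr (by decide)) (by rw [cN3]; decide)).elim
      · exact (same_line_kill hT3 hMT hN2T (E0+E1+E3) E2 (by decide) ((cM' _).mpr (by decide))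
          ((cN2 _).mpr (by decide)) ((cM' _).mpr (by decide)) (by rw [cN2]; decide)).elim
      · first
        | exact cM'
        | (intro t; rw [cM' t]; revert t; decide)
      · exact (same_line_kill hT3 hMT hN3T (E0+E2+E3) E2 (by decide) ((cM' _).mpr (by decide))
          ((cN3 _).mpr (by decide)) ((cM' _).mpr (by decide)) (by rw [cN3]; decide)).elim
      · exact (same_line_kill hT3 hMT hN3T (E1+E2+E3) E2 (by decide) ((cM' _).mpr (by decide))
          ((cN3 _).mpr (by decide)) ((cM' _).mpr (by decide)) (by rw [cN3]; decide)).elim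
      · exact (same_line_kill hT3 hMT hN2T (E0+E1+E3) E2 (by decide) ((cM' _).mpr (by decide))
          ((cN2 _).mpr (by decide)) ((cM' _).mpr (by decide)) (by rw [cN2]; decide)).elim
    clear cM' hy20 hy2q
    -- K1 : the T1-line through E2 (pencil at E2)
    obtain ⟨K1, hK1T, y3, hy30, hy3q, cK1'⟩ := line_through hT1 (show (E2:V42) ≠ 0 from by decide)
    have hMle := hc E2 (by decide) K1 P2 M hK1T ((cK1' E2).mpr (by tauto)) hP2T hP2b hMT
      ((cM E2).mpr (by decide))
    have cK1 : ∀ t, t ∈ K1 ↔ (t = 0 ∨ t = E2 ∨ t = E0+E3 ∨ t = E0+E2+E3) := by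
      obtain ⟨u, hu, v, hv, huv⟩ := Submodule.mem_sup.mp (hMle ((cM E3).mpr (by decide)))
      rw [cK1'] at hu
      rw [cP2] at hv
      have hy3c : y3 = E3 ∨ y3 = E0+E3 ∨ y3 = E2+E3 ∨ y3 = E0+E2+E3 := by
        rcases hu with rfl | rfl | rfl | rfl <;> rcases hv with rfl | rfl | rfl | rfl <;>
          first
            | exact absurd huv (by decide)
            | (have h' := move_add huv; subst h'; decide)
            | (have h1 := move_add huv; have h2 := move_add' h1; subst h2; decide)
      rcases hy3c with rfl | rfl | rfl | rfl
      · exact (cross_kill hK1T hMT d13 cK1' cM (by decide)).elim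
      · first
        | exact cK1'
        | (intro t; rw [cK1' t]; revert t; decide)
      · exact (cross_kill hK1T hMT d13 cK1' cM (by decide)).elim
      · first
        | exact cK1'
        | (intro t; rw [cK1' t]; revert t; decide)
    clear cK1' hMle hy30 hy3q
    -- K2 : the T1-line through E3 (pencil at E3)
    obtain ⟨K2, hK2T, y4, hy40, hy4q, cK2'⟩ := line_through hT1 (show (E3:V42) ≠ 0 from by decide)
    have hMle2 := hc E3 (by decide) K2 P3 M hK2T ((cK2' E3).mpr (by tauto)) hP3T hP3b hMT
      ((cM E3).mpr (by decide))
    have cK2 : ∀ t, t ∈ K2 ↔ (t = 0 ∨ t = E3 ∨ t = E1+E2 ∨ t = E1+E2+E3) := by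
      obtain ⟨u, hu, v, hv, huv⟩ := Submodule.mem_sup.mp (hMle2 ((cM E2).mpr (by decide)))
      rw [cK2'] at hu
      rw [cP3] at hv
      have hy4c : y4 = E2 ∨ y4 = E1+E2 ∨ y4 = E2+E3 ∨ y4 = E1+E2+E3 := by
        rcases hu with rfl | rfl | rfl | rfl <;> rcases hv with rfl | rfl | rfl | rfl <;>
          first
            | exact absurd huv (by decide)
            | (have h' := move_add huv; subst h'; decide)
            | (have h1 := move_add huv; have h2 := move_add' h1; subst h2; decide)
      rcases hy4c with rfl | rfl | rfl | rfl
      · exact (cross_kill hK2T hMT d13 cK2' cM (by decide)).elim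
      · first
        | exact cK2'
        | (intro t; rw [cK2' t]; revert t; decide)
      · exact (cross_kill hK2T hMT d13 cK2' cM (by decide)).elim
      · first
        | exact cK2'
        | (intro t; rw [cK2' t]; revert t; decide)
    clear cK2' hMle2 hy40 hy4q
    -- K3 : the T1-line through E0+E2
    obtain ⟨K3, hK3T, y5, hy50, hy5q, cK3'⟩ := line_through hT1 (show E0+E2 ≠ (0:V42) from by decide)
    have cK3 : ∀ t, t ∈ K3 ↔ (t = 0 ∨ t = E0+E2 ∨ t = E1+E3 ∨ t = E0+E1+E2+E3) := by
      rcases v42_cases y5 with rfl|rfl|rfl|rfl|rfl|rfl|rfl|rfl|rfl|rfl|rfl|rfl|rfl|rfl|rfl|rfl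
      · exact absurd rfl hy50
      · exact (same_line_kill hT1 hK3T hP1T E0 (E0+E2) (by decide) ((cK3' _).mpr (by decide))
          ((cP1 _).mpr (by decide)) ((cK3' _).mpr (by decide)) (by rw [cP1]; decide)).elim
      · exact (same_line_kill hT1 hK3T hP1T E1 (E0+E2) (by decide) ((cK3' _).mpr (by decide))
          ((cP1 _).mpr (by decide)) ((cK3' _).mpr (by decide)) (by rw [cP1]; decide)).elim
      · exact (same_line_kill hT1 hK3T hP1T (E0+E1) (E0+E2) (by decide) ((cK3' _).mpr (by decide))
          ((cP1 _).mpr (by decide)) ((cK3' _).mpr (by decide)) (by rw [cP1]; decide)).elim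
      · exact (same_line_kill hT1 hK3T hK1T E2 (E0+E2) (by decide) ((cK3' _).mpr (by decide))
          ((cK1 _).mpr (by decide)) ((cK3' _).mpr (by decide)) (by rw [cK1]; decide)).elim
      · exact absurd rfl hy5q
      · exact (same_line_kill hT1 hK3T hK2T (E1+E2) (E0+E2) (by decide) ((cK3' _).mpr (by decide))
          ((cK2 _).mpr (by decide)) ((cK3' _).mpr (by decide)) (by rw [cK2]; decide)).elim
      · exact (same_line_kill hT1 hK3T hP1T E1 (E0+E2) (by decide) ((cK3' _).mpr (by decide))
          ((cP1 _).mpr (by decide)) ((cK3' _).mpr (by decide)) (by rw [cP1]; decide)).elim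
      · exact (same_line_kill hT1 hK3T hK2T E3 (E0+E2) (by decide) ((cK3' _).mpr (by decide))
          ((cK2 _).mpr (by decide)) ((cK3' _).mpr (by decide)) (by rw [cK2]; decide)).elim
      · exact (same_line_kill hT1 hK3T hK1T (E0+E3) (E0+E2) (by decide) ((cK3' _).mpr (by decide))
          ((cK1 _).mpr (by decide)) ((cK3' _).mpr (by decide)) (by rw [cK1]; decide)).elim
      · first
        | exact cK3'
        | (intro t; rw [cK3' t]; revert t; decide)
      · exact (same_line_kill hT1 hK3T hK2T (E1+E2+E3) (E0+E2) (by decide) ((cK3' _).mpr (by decide))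
          ((cK2 _).mpr (by decide)) ((cK3' _).mpr (by decide)) (by rw [cK2]; decide)).elim
      · exact (same_line_kill hT1 hK3T hK1T (E0+E3) (E0+E2) (by decide) ((cK3' _).mpr (by decide))
          ((cK1 _).mpr (by decide)) ((cK3' _).mpr (by decide)) (by rw [cK1]; decide)).elim
      · exact (same_line_kill hT1 hK3T hK1T (E0+E2+E3) (E0+E2) (by decide) ((cK3' _).mpr (by decide))
          ((cK1 _).mpr (by decide)) ((cK3' _).mpr (by decide)) (by rw [cK1]; decide)).elim
      · exact (same_line_kill hT1 hK3T hK2T (E1+E2+E3) (E0+E2) (by decide) ((cK3' _).mpr (by decide))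
          ((cK2 _).mpr (by decide)) ((cK3' _).mpr (by decide)) (by rw [cK2]; decide)).elim
      · first
        | exact cK3'
        | (intro t; rw [cK3' t]; revert t; decide)
    clear cK3' hy50 hy5q
    -- final contradiction in case A : the T3-line through E0+E2
    obtain ⟨N4, hN4T, y6, hy60, hy6q, cN4'⟩ := line_through hT3 (show E0+E2 ≠ (0:V42) from by decide)
    have hN4le := hc (E0+E2) (by decide) K3 P2 N4 hK3T ((cK3 _).mpr (by decide)) hP2T
      ((cP2 _).mpr (by decide)) hN4T ((cN4' _).mpr (by tauto))
    obtain ⟨u, hu, v, hv, huv⟩ := Submodule.mem_sup.mp (hN4le ((cN4' y6).mpr (by tauto)))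
    rw [cK3] at hu
    rw [cP2] at hv
    have hy6c : y6 = 0 ∨ y6 = E0+E2 ∨ y6 = E0 ∨ y6 = E2 ∨ y6 = E1+E3 ∨ y6 = E0+E1+E3 ∨
        y6 = E1+E2+E3 ∨ y6 = E0+E1+E2+E3 := by
      rcases hu with rfl | rfl | rfl | rfl <;> rcases hv with rfl | rfl | rfl | rfl <;>
        subst huv <;> decide
    rcases hy6c with rfl | rfl | rfl | rfl | rfl | rfl | rfl | rfl
    · exact absurd rfl hy60
    · exact absurd rfl hy6q
    · exact same_line_kill hT3 hN4T hN1T E0 (E0+E2) (by decide) ((cN4' _).mpr (by decide))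
        ((cN1 _).mpr (by decide)) ((cN4' _).mpr (by decide)) (by rw [cN1]; decide)
    · exact same_line_kill hT3 hN4T hMT E2 (E0+E2) (by decide) ((cN4' _).mpr (by decide))
        ((cM _).mpr (by decide)) ((cN4' _).mpr (by decide)) (by rw [cM]; decide)
    · exact cross_kill hK3T hN4T d13 cK3 cN4' (by decide)
    · exact same_line_kill hT3 hN4T hN2T (E0+E1+E3) (E0+E2) (by decide) ((cN4' _).mpr (by decide))
        ((cN2 _).mpr (by decide)) ((cN4' _).mpr (by decide)) (by rw [cN2]; decide)
    · exact same_line_kill hT3 hN4T hN3T (E1+E2+E3) (E0+E2) (by decide) ((cN4' _).mpr (by decide))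
        ((cN3 _).mpr (by decide)) ((cN4' _).mpr (by decide)) (by rw [cN3]; decide)
    · exact cross_kill hK3T hN4T d13 cK3 cN4' (by decide)
  · -- CASE B : L23 = {0, E01, E023, E123}
    -- N3 : the T3-line through E0+E1
    obtain ⟨N3, hN3T, w3, hw30, hw3q, cN3'⟩ := line_through hT3 (show E0+E1 ≠ (0:V42) from by decide)
    have hN3le := hc (E0+E1) (by decide) P1 L23 N3 hP1T ((cP1 _).mpr (by decide)) hL23T
      ((cL23 _).mpr (by decide)) hN3T ((cN3' _).mpr (by tauto))
    have cN3 : ∀ t, t ∈ N3 ↔ (t = 0 ∨ t = E0+E1 ∨ t = E2+E3 ∨ t = E0+E1+E2+E3) := by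
      obtain ⟨u, hu, v, hv, huv⟩ := Submodule.mem_sup.mp (hN3le ((cN3' w3).mpr (by tauto)))
      rw [cP1] at hu
      rw [cL23] at hv
      have hcases : w3 = 0 ∨ w3 = E0+E1 ∨ w3 = E0 ∨ w3 = E1 ∨ w3 = E0+E2+E3 ∨ w3 = E1+E2+E3 ∨
          w3 = E2+E3 ∨ w3 = E0+E1+E2+E3 := by
        rcases hu with rfl | rfl | rfl | rfl <;> rcases hv with rfl | rfl | rfl | rfl <;>
          subst huv <;> decide
      rcases hcases with rfl | rfl | rfl | rfl | rfl | rfl | rfl | rfl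
      · exact absurd rfl hw30
      · exact absurd rfl hw3q
      · exact (same_line_kill hT3 hN3T hN1T E0 (E0+E1) (by decide) ((cN3' _).mpr (by decide))
          ((cN1 _).mpr (by decide)) ((cN3' _).mpr (by decide)) (by rw [cN1]; decide)).elim
      · exact (same_line_kill hT3 hN3T hN2T E1 (E0+E1) (by decide) ((cN3' _).mpr (by decide))
          ((cN2 _).mpr (by decide)) ((cN3' _).mpr (by decide)) (by rw [cN2]; decide)).elim
      · exact (cross_kill hL23T hN3T d23 cL23 cN3' (by decide)).elim
      · exact (cross_kill hL23T hN3T d23 cL23 cN3' (by decide)).elim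
      · first
        | exact cN3'
        | (intro t; rw [cN3' t]; revert t; decide)
      · first
        | exact cN3'
        | (intro t; rw [cN3' t]; revert t; decide)
    clear cN3' hN3le hw30 hw3q
    -- M : the T3-line through E2
    obtain ⟨M, hMT, y2, hy20, hy2q, cM'⟩ := line_through hT3 (show (E2:V42) ≠ 0 from by decide)
    have cM : ∀ t, t ∈ M ↔ (t = 0 ∨ t = E2 ∨ t = E1+E3 ∨ t = E1+E2+E3) := by
      rcases v42_cases y2 with rfl|rfl|rfl|rfl|rfl|rfl|rfl|rfl|rfl|rfl|rfl|rfl|rfl|rfl|rfl|rfl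
      · exact absurd rfl hy20
      · exact (same_line_kill hT3 hMT hN1T E0 E2 (by decide) ((cM' _).mpr (by decide))
          ((cN1 _).mpr (by decide)) ((cM' _).mpr (by decide)) (by rw [cN1]; decide)).elim
      · exact (same_line_kill hT3 hMT hN2T E1 E2 (by decide) ((cM' _).mpr (by decide))
          ((cN2 _).mpr (by decide)) ((cM' _).mpr (by decide)) (by rw [cN2]; decide)).elim
      · exact (same_line_kill hT3 hMT hN3T (E0+E1) E2 (by decide) ((cM' _).mpr (by decide))
          ((cN3 _).mpr (by decide)) ((cM' _).mpr (by decide)) (by rw [cN3]; decide)).elim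
      · exact absurd rfl hy2q
      · exact (same_line_kill hT3 hMT hN1T E0 E2 (by decide) ((cM' _).mpr (by decide))
          ((cN1 _).mpr (by decide)) ((cM' _).mpr (by decide)) (by rw [cN1]; decide)).elim
      · exact (same_line_kill hT3 hMT hN1T (E1+E2) E2 (by decide) ((cM' _).mpr (by decide))
          ((cN1 _).mpr (by decide)) ((cM' _).mpr (by decide)) (by rw [cN1]; decide)).elim
      · exact (same_line_kill hT3 hMT hN1T (E0+E1+E2) E2 (by decide) ((cM' _).mpr (by decide))
          ((cN1 _).mpr (by decide)) ((cM' _).mpr (by decide)) (by rw [cN1]; decide)).elim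
      · exact (same_line_kill hT3 hMT hN3T (E2+E3) E2 (by decide) ((cM' _).mpr (by decide))
          ((cN3 _).mpr (by decide)) ((cM' _).mpr (by decide)) (by rw [cN3]; decide)).elim
      · exact (same_line_kill hT3 hMT hN2T (E0+E3) E2 (by decide) ((cM' _).mpr (by decide))
          ((cN2 _).mpr (by decide)) ((cM' _).mpr (by decide)) (by rw [cN2]; decide)).elim
      · first
        | exact cM'
        | (intro t; rw [cM' t]; revert t; decide)
      · exact (same_line_kill hT3 hMT hN2T (E0+E1+E3) E2 (by decide) ((cM' _).mpr (by decide))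
          ((cN2 _).mpr (by decide)) ((cM' _).mpr (by decide)) (by rw [cN2]; decide)).elim
      · exact (same_line_kill hT3 hMT hN3T (E2+E3) E2 (by decide) ((cM' _).mpr (by decide))
          ((cN3 _).mpr (by decide)) ((cM' _).mpr (by decide)) (by rw [cN3]; decide)).elim
      · exact (same_line_kill hT3 hMT hN2T (E0+E3) E2 (by decide) ((cM' _).mpr (by decide))
          ((cN2 _).mpr (by decide)) ((cM' _).mpr (by decide)) (by rw [cN2]; decide)).elim
      · first
        | exact cM'
        | (intro t; rw [cM' t]; revert t; decide)
      · exact (same_line_kill hT3 hMT hN3T (E0+E1+E2+E3) E2 (by decide) ((cM' _).mpr (by decide))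
          ((cN3 _).mpr (by decide)) ((cM' _).mpr (by decide)) (by rw [cN3]; decide)).elim
    clear cM' hy20 hy2q
    -- M' : the T3-line through E3
    obtain ⟨M', hM'T, y7, hy70, hy7q, cM''⟩ := line_through hT3 (show (E3:V42) ≠ 0 from by decide)
    have cMp : ∀ t, t ∈ M' ↔ (t = 0 ∨ t = E3 ∨ t = E0+E2 ∨ t = E0+E2+E3) := by
      rcases v42_cases y7 with rfl|rfl|rfl|rfl|rfl|rfl|rfl|rfl|rfl|rfl|rfl|rfl|rfl|rfl|rfl|rfl
      · exact absurd rfl hy70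
      · exact (same_line_kill hT3 hM'T hN1T E0 E3 (by decide) ((cM'' _).mpr (by decide))
          ((cN1 _).mpr (by decide)) ((cM'' _).mpr (by decide)) (by rw [cN1]; decide)).elim
      · exact (same_line_kill hT3 hM'T hN2T E1 E3 (by decide) ((cM'' _).mpr (by decide))
          ((cN2 _).mpr (by decide)) ((cM'' _).mpr (by decide)) (by rw [cN2]; decide)).elim
      · exact (same_line_kill hT3 hM'T hN3T (E0+E1) E3 (by decide) ((cM'' _).mpr (by decide))
          ((cN3 _).mpr (by decide)) ((cM'' _).mpr (by decide)) (by rw [cN3]; decide)).elim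
      · exact (same_line_kill hT3 hM'T hMT E2 E3 (by decide) ((cM'' _).mpr (by decide))
          ((cM _).mpr (by decide)) ((cM'' _).mpr (by decide)) (by rw [cM]; decide)).elim
      · first
        | exact cM''
        | (intro t; rw [cM'' t]; revert t; decide)
      · exact (same_line_kill hT3 hM'T hN1T (E1+E2) E3 (by decide) ((cM'' _).mpr (by decide))
          ((cN1 _).mpr (by decide)) ((cM'' _).mpr (by decide)) (by rw [cN1]; decide)).elim
      · exact (same_line_kill hT3 hM'T hN1T (E0+E1+E2) E3 (by decide) ((cM'' _).mpr (by decide))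
          ((cN1 _).mpr (by decide)) ((cM'' _).mpr (by decide)) (by rw [cN1]; decide)).elim
      · exact absurd rfl hy7q
      · exact (same_line_kill hT3 hM'T hN2T (E0+E3) E3 (by decide) ((cM'' _).mpr (by decide))
          ((cN2 _).mpr (by decide)) ((cM'' _).mpr (by decide)) (by rw [cN2]; decide)).elim
      · exact (same_line_kill hT3 hM'T hMT (E1+E3) E3 (by decide) ((cM'' _).mpr (by decide))
          ((cM _).mpr (by decide)) ((cM'' _).mpr (by decide)) (by rw [cM]; decide)).elim
      · exact (same_line_kill hT3 hM'T hN2T (E0+E1+E3) E3 (by decide) ((cM'' _).mpr (by decide))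
          ((cN2 _).mpr (by decide)) ((cM'' _).mpr (by decide)) (by rw [cN2]; decide)).elim
      · exact (same_line_kill hT3 hM'T hN3T (E2+E3) E3 (by decide) ((cM'' _).mpr (by decide))
          ((cN3 _).mpr (by decide)) ((cM'' _).mpr (by decide)) (by rw [cN3]; decide)).elim
      · first
        | exact cM''
        | (intro t; rw [cM'' t]; revert t; decide)
      · exact (same_line_kill hT3 hM'T hMT (E1+E2+E3) E3 (by decide) ((cM'' _).mpr (by decide))
          ((cM _).mpr (by decide)) ((cM'' _).mpr (by decide)) (by rw [cM]; decide)).elim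
      · exact (same_line_kill hT3 hM'T hN3T (E0+E1+E2+E3) E3 (by decide) ((cM'' _).mpr (by decide))
          ((cN3 _).mpr (by decide)) ((cM'' _).mpr (by decide)) (by rw [cN3]; decide)).elim
    clear cM'' hy70 hy7q
    -- K1 : the T1-line through E2 (pencil at E2)
    obtain ⟨K1, hK1T, y3, hy30, hy3q, cK1'⟩ := line_through hT1 (show (E2:V42) ≠ 0 from by decide)
    have hMle := hc E2 (by decide) K1 P2 M hK1T ((cK1' E2).mpr (by tauto)) hP2T hP2b hMT
      ((cM E2).mpr (by decide))
    have cK1 : ∀ t, t ∈ K1 ↔ (t = 0 ∨ t = E2 ∨ t = E0+E1+E3 ∨ t = E0+E1+E2+E3) := by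
      obtain ⟨u, hu, v, hv, huv⟩ := Submodule.mem_sup.mp (hMle ((cM (E1+E3)).mpr (by decide)))
      rw [cK1'] at hu
      rw [cP2] at hv
      have hy3c : y3 = E1+E3 ∨ y3 = E0+E1+E3 ∨ y3 = E1+E2+E3 ∨ y3 = E0+E1+E2+E3 := by
        rcases hu with rfl | rfl | rfl | rfl <;> rcases hv with rfl | rfl | rfl | rfl <;>
          first
            | exact absurd huv (by decide)
            | (have h' := move_add huv; subst h'; decide)
            | (have h1 := move_add huv; have h2 := move_add' h1; subst h2; decide)
      rcases hy3c with rfl | rfl | rfl | rfl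
      · exact (cross_kill hK1T hMT d13 cK1' cM (by decide)).elim
      · first
        | exact cK1'
        | (intro t; rw [cK1' t]; revert t; decide)
      · exact (cross_kill hK1T hMT d13 cK1' cM (by decide)).elim
      · first
        | exact cK1'
        | (intro t; rw [cK1' t]; revert t; decide)
    clear cK1' hMle hy30 hy3q
    -- K2 : the T1-line through E3 (pencil at E3)
    obtain ⟨K2, hK2T, y4, hy40, hy4q, cK2'⟩ := line_through hT1 (show (E3:V42) ≠ 0 from by decide)
    have hMle2 := hc E3 (by decide) K2 P3 M' hK2T ((cK2' E3).mpr (by tauto)) hP3T hP3b hM'T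
      ((cMp E3).mpr (by decide))
    have cK2 : ∀ t, t ∈ K2 ↔ (t = 0 ∨ t = E3 ∨ t = E0+E1+E2 ∨ t = E0+E1+E2+E3) := by
      obtain ⟨u, hu, v, hv, huv⟩ := Submodule.mem_sup.mp (hMle2 ((cMp (E0+E2)).mpr (by decide)))
      rw [cK2'] at hu
      rw [cP3] at hv
      have hy4c : y4 = E0+E2 ∨ y4 = E0+E1+E2 ∨ y4 = E0+E2+E3 ∨ y4 = E0+E1+E2+E3 := by
        rcases hu with rfl | rfl | rfl | rfl <;> rcases hv with rfl | rfl | rfl | rfl <;>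
          first
            | exact absurd huv (by decide)
            | (have h' := move_add huv; subst h'; decide)
            | (have h1 := move_add huv; have h2 := move_add' h1; subst h2; decide)
      rcases hy4c with rfl | rfl | rfl | rfl
      · exact (cross_kill hK2T hM'T d13 cK2' cMp (by decide)).elim
      · first
        | exact cK2'
        | (intro t; rw [cK2' t]; revert t; decide)
      · exact (cross_kill hK2T hM'T d13 cK2' cMp (by decide)).elim
      · first
        | exact cK2'
        | (intro t; rw [cK2' t]; revert t; decide)
    clear cK2' hMle2 hy40 hy4q
    -- final contradiction in case B : K1 and K2 share E0+E1+E2+E3 but differ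
    exact same_line_kill hT1 hK2T hK1T (E0+E1+E2+E3) E3 (by decide) ((cK2 _).mpr (by decide))
      ((cK1 _).mpr (by decide)) ((cK2 _).mpr (by decide)) (by rw [cK1]; decide)


set_option maxHeartbeats 2000000 in
/-- No three pairwise disjoint line spreads of `V(4,2)` can satisfy: for every
nonzero point `Q`, the line of `S3` through `Q` lies in the span of the lines of
`S1` and `S2` through `Q`. -/
theorem no_three_compatible_spreads :
    ¬ ∃ S1 S2 S3 : Set (Submodule (ZMod 2) V42),
      IsLineSpread S1 ∧ IsLineSpread S2 ∧ IsLineSpread S3 ∧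
      S1 ∩ S2 = ∅ ∧ S1 ∩ S3 = ∅ ∧ S2 ∩ S3 = ∅ ∧
      ∀ Q : V42, Q ≠ 0 →
        ∀ L1 L2 L3 : Submodule (ZMod 2) V42,
          L1 ∈ S1 → Q ∈ L1 → L2 ∈ S2 → Q ∈ L2 → L3 ∈ S3 → Q ∈ L3 →
          L3 ≤ L1 ⊔ L2 := by
  rintro ⟨S1, S2, S3, hS1, hS2, hS3, d12, d13, d23, hc⟩
  -- the S1-line through E0, with second generator Q2
  obtain ⟨L1, hL1S, Q2, hQ20, hQ2q, cL1⟩ := line_through hS1 (show (E0:V42) ≠ 0 from by decide)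
  -- the S2-line through E0, with second generator b1
  obtain ⟨L2, hL2S, b1, hb10, hb1q, cL2⟩ := line_through hS2 (show (E0:V42) ≠ 0 from by decide)
  have hb1Q2 : b1 ≠ Q2 := by
    intro h; subst h
    exact cross_kill hL1S hL2S d12 cL1 cL2 (fun v => Iff.rfl)
  have hb1Q2' : b1 ≠ E0 + Q2 := by
    intro h; subst h
    refine cross_kill hL1S hL2S d12 cL1 cL2 (fun v => ?_)
    rw [show E0 + (E0 + Q2) = Q2 from by rw [← add_assoc, zadd_self, zero_add]]
    tauto
  -- the S2-line through Q2, with second generator b2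
  obtain ⟨L2', hL2'S, b2, hb20, hb2q, cL2'⟩ := line_through hS2 hQ20
  have hQ2L2 : Q2 ∉ L2 := by
    rw [cL2]
    rintro (h | h | h | h)
    · exact hQ20 h
    · exact hQ2q h
    · exact hb1Q2 h.symm
    · exact hb1Q2' (move_add' h.symm)
  have hA : b2 ≠ E0 := by
    intro h; subst h
    exact same_line_kill hS2 hL2'S hL2S E0 Q2 (by decide) ((cL2' E0).mpr (by tauto))
      ((cL2 E0).mpr (by tauto)) ((cL2' Q2).mpr (by tauto)) hQ2L2
  have hB : b2 ≠ E0 + Q2 := by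
    intro h; subst h
    refine same_line_kill hS2 hL2'S hL2S E0 Q2 (by decide) ((cL2' E0).mpr ?_)
      ((cL2 E0).mpr (by tauto)) ((cL2' Q2).mpr (by tauto)) hQ2L2
    right; right; right
    rw [add_comm E0 Q2, ← add_assoc, zadd_self, zero_add]
  have hC : b2 ≠ b1 := by
    intro h
    exact same_line_kill hS2 hL2'S hL2S b1 Q2 hb10
      ((cL2' b1).mpr (Or.inr (Or.inr (Or.inl h.symm))))
      ((cL2 b1).mpr (by tauto)) ((cL2' Q2).mpr (by tauto)) hQ2L2
  have hD : b2 ≠ E0 + b1 := by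
    intro h
    exact same_line_kill hS2 hL2'S hL2S (E0 + b1) Q2
      (fun hh => hb1q (eq_of_add_eq_zero hh).symm)
      ((cL2' (E0+b1)).mpr (Or.inr (Or.inr (Or.inl h.symm))))
      ((cL2 (E0+b1)).mpr (by tauto)) ((cL2' Q2).mpr (by tauto)) hQ2L2
  have hE : b2 ≠ Q2 + b1 := by
    intro h; subst h
    refine same_line_kill hS2 hL2'S hL2S b1 Q2 hb10 ((cL2' b1).mpr ?_)
      ((cL2 b1).mpr (by tauto)) ((cL2' Q2).mpr (by tauto)) hQ2L2
    right; right; right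
    rw [← add_assoc, zadd_self, zero_add]
  have hF : b2 ≠ E0 + Q2 + b1 := by
    intro h; subst h
    refine same_line_kill hS2 hL2'S hL2S (E0 + b1) Q2 ?_ ((cL2' (E0+b1)).mpr ?_)
      ((cL2 (E0+b1)).mpr (by tauto)) ((cL2' Q2).mpr (by tauto)) hQ2L2
    · intro h
      exact hb1q (eq_of_add_eq_zero h).symm
    · right; right; right
      linear_combination -zadd_self Q2
  -- linear independence of E0, Q2, b1, b2
  have hzc : ∀ c : ZMod 2, c = 0 ∨ c = 1 := by decide
  have hli : LinearIndependent (ZMod 2) ![E0, Q2, b1, b2] := by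
    rw [Fintype.linearIndependent_iff]
    intro g hg
    rw [Fin.sum_univ_four] at hg
    simp only [Matrix.cons_val_zero, Matrix.cons_val_one, Matrix.head_cons,
      Matrix.cons_val_two, Matrix.tail_cons, Matrix.cons_val_three, Matrix.head_fin_const] at hg
    rcases hzc (g 0) with h0 | h0 <;> rcases hzc (g 1) with h1 | h1 <;>
      rcases hzc (g 2) with h2 | h2 <;> rcases hzc (g 3) with h3 | h3 <;>
      rw [h0, h1, h2, h3] at hg <;>
      simp only [zero_smul, one_smul, add_zero, zero_add] at hg <;>
      first
        | (intro i; fin_cases i <;> assumption)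
        | exact absurd hg (by decide)
        | exact absurd hg hQ20
        | exact absurd hg hb10
        | exact absurd hg hb20
        | exact absurd (eq_of_add_eq_zero hg).symm (by intro h; exact hQ2q h)
        | exact absurd (eq_of_add_eq_zero hg).symm hb1q
        | exact absurd (eq_of_add_eq_zero hg).symm hb1Q2
        | exact absurd (eq_of_add_eq_zero hg).symm hb1Q2'
        | exact absurd (eq_of_add_eq_zero hg).symm hA
        | exact absurd (eq_of_add_eq_zero hg).symm hb2q
        | exact absurd (eq_of_add_eq_zero hg).symm hB
        | exact absurd (eq_of_add_eq_zero hg).symm hC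
        | exact absurd (eq_of_add_eq_zero hg).symm hD
        | exact absurd (eq_of_add_eq_zero hg).symm hE
        | exact absurd (eq_of_add_eq_zero hg).symm hF
  have hcard : Fintype.card (Fin 4) = Module.finrank (ZMod 2) V42 := by simp
  let B : Module.Basis (Fin 4) (ZMod 2) V42 := basisOfLinearIndependentOfCardEqFinrank hli hcard
  have hB : ⇑B = ![E0, Q2, b1, b2] := coe_basisOfLinearIndependentOfCardEqFinrank hli hcard
  let f : V42 ≃ₗ[ZMod 2] V42 := B.equivFun
  have hfB : ∀ i : Fin 4, f (B i) = fun j => if i = j then (1:ZMod 2) else 0 :=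
    fun i => funext fun j => B.equivFun_self i j
  have hf0 : f E0 = E0 := by
    have h := hfB 0
    rw [show B 0 = E0 from by rw [show B 0 = (⇑B) 0 from rfl, hB]; rfl] at h
    rw [h]; funext j; fin_cases j <;> rfl
  have hf1 : f Q2 = E1 := by
    have h := hfB 1
    rw [show B 1 = Q2 from by rw [show B 1 = (⇑B) 1 from rfl, hB]; rfl] at h
    rw [h]; funext j; fin_cases j <;> rfl
  have hf2 : f b1 = E2 := by
    have h := hfB 2
    rw [show B 2 = b1 from by rw [show B 2 = (⇑B) 2 from rfl, hB]; rfl] at h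
    rw [h]; funext j; fin_cases j <;> rfl
  have hf3 : f b2 = E3 := by
    have h := hfB 3
    rw [show B 3 = b2 from by rw [show B 3 = (⇑B) 3 from rfl, hB]; rfl] at h
    rw [h]; funext j; fin_cases j <;> rfl
  have hs0 : f.symm E0 = E0 := by rw [LinearEquiv.symm_apply_eq, hf0]
  have hs1 : f.symm E1 = Q2 := by rw [LinearEquiv.symm_apply_eq, hf1]
  have hs2 : f.symm E2 = b1 := by rw [LinearEquiv.symm_apply_eq, hf2]
  have hs3 : f.symm E3 = b2 := by rw [LinearEquiv.symm_apply_eq, hf3]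
  refine core (mapS f S1) (mapS f S2) (mapS f S3)
    (mapS_spread f hS1) (mapS_spread f hS2) (mapS_spread f hS3)
    (mapS_disjoint f d12) (mapS_disjoint f d13) (mapS_disjoint f d23)
    (mapS_cond f hc)
    (Submodule.map (f : V42 →ₗ[ZMod 2] V42) L1)
    (Submodule.map (f : V42 →ₗ[ZMod 2] V42) L2)
    (Submodule.map (f : V42 →ₗ[ZMod 2] V42) L2')
    (Set.mem_image_of_mem _ hL1S) ?_ ?_
    (Set.mem_image_of_mem _ hL2S) ?_ ?_
    (Set.mem_image_of_mem _ hL2'S) ?_ ?_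
  · rw [Submodule.mem_map_equiv, hs0]
    exact (cL1 E0).mpr (by tauto)
  · rw [Submodule.mem_map_equiv, hs1]
    exact (cL1 Q2).mpr (by tauto)
  · rw [Submodule.mem_map_equiv, hs0]
    exact (cL2 E0).mpr (by tauto)
  · rw [Submodule.mem_map_equiv, hs2]
    exact (cL2 b1).mpr (by tauto)
  · rw [Submodule.mem_map_equiv, hs1]
    exact (cL2' Q2).mpr (by tauto)
  · rw [Submodule.mem_map_equiv, hs3]
    exact (cL2' b2).mpr (by tauto)
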